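/- arXiv:1012.0222 — 2 statements merged into one kernel-verified Lean document; each statement's English description precedes it below -/
import Mathlib

section
/- Let k be a field of characteristic zero, N > 1, q ∈ k a primitive N-th root of unity, and A a k-algebra. If x, y ∈ A satisfy y·x = q·(x·y) and x^i y^{N−i} = 0 for every 0 ≤ i ≤ N (in particular x^N = 0 and y^N = 0), then exp_q(x + y) = exp_q(x) · exp_q(y). -/
/-- The q-integer `(n)_q = 1 + q + ⋯ + q^{n-1}`. -/
def qNat {k : Type*} [Field k] (q : k) (n : ℕ) : k :=
  ∑ i ∈ Finset.range n, q ^ i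

/-- The q-factorial `(n)!_q = (1)_q (2)_q ⋯ (n)_q`, with `(0)!_q = 1`. -/
def qFact {k : Type*} [Field k] (q : k) (n : ℕ) : k :=
  ∏ i ∈ Finset.range n, qNat q (i + 1)

/-- The truncated q-exponential `exp_q(z) = ∑_{n=0}^{N-1} (1/(n)!_q) · z^n`. -/
noncomputable def qExp {k A : Type*} [Field k] [Ring A] [Algebra k A]
    (q : k) (N : ℕ) (z : A) : A :=
  ∑ n ∈ Finset.range N, (qFact q n)⁻¹ • z ^ n

/-- Gaussian binomial coefficient, defined by the Pascal-type recursion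
`c(n+1, j+1) = q^(n-j) c(n,j) + c(n,j+1)`. -/
def qBinom {k : Type*} [Field k] (q : k) : ℕ → ℕ → k
  | _, 0 => 1
  | 0, _ + 1 => 0
  | n + 1, j + 1 => q ^ (n - j) * qBinom q n j + qBinom q n (j + 1)

lemma qBinom_zero {k : Type*} [Field k] (q : k) (n : ℕ) : qBinom q n 0 = 1 := by
  cases n <;> rfl

lemma qBinom_eq_zero {k : Type*} [Field k] (q : k) :
    ∀ n j : ℕ, n < j → qBinom q n j = 0 := by
  intro n
  induction n with
  | zero => intro j hj; obtain ⟨j', rfl⟩ := Nat.exists_eq_add_of_lt hj; rfl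
  | succ n ih =>
    intro j hj
    obtain ⟨j', rfl⟩ : ∃ j', j = j' + 1 := ⟨j - 1, by omega⟩
    show q ^ (n - j') * qBinom q n j' + qBinom q n (j' + 1) = 0
    rw [ih j' (by omega), ih (j' + 1) (by omega)]
    ring

lemma qNat_add {k : Type*} [Field k] (q : k) (a b : ℕ) :
    qNat q (a + b) = qNat q a + q ^ a * qNat q b := by
  simp only [qNat, Finset.sum_range_add, Finset.mul_sum, pow_add]

lemma qFact_succ {k : Type*} [Field k] (q : k) (n : ℕ) :
    qFact q (n + 1) = qFact q n * qNat q (n + 1) := by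
  simp [qFact, Finset.prod_range_succ]

/-- Pascal-type factorization of the q-factorial. -/
lemma qFact_eq_qBinom_mul {k : Type*} [Field k] (q : k) :
    ∀ n : ℕ, ∀ i ≤ n, qFact q n = qBinom q n i * (qFact q i * qFact q (n - i)) := by
  intro n
  induction n with
  | zero =>
    intro i hi
    interval_cases i
    simp [qFact, qBinom_zero]
  | succ n ih =>
    intro i hi
    match i with
    | 0 => simp [qBinom_zero, qFact]
    | j + 1 =>
      have hj : j ≤ n := by omega
      have key : qFact q n * qNat q (n - j) =
          qBinom q n (j + 1) * (qFact q (j + 1) * qFact q (n - (j + 1))) * qNat q (n - j) := by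
        rcases Nat.lt_or_ge j n with h | h
        · rw [ih (j + 1) h]
        · have e0 : n - j = 0 := by omega
          rw [e0]
          simp [qNat]
      have hsplit : qNat q (n + 1) = qNat q (n - j) + q ^ (n - j) * qNat q (j + 1) := by
        have : n + 1 = (n - j) + (j + 1) := by omega
        rw [this, qNat_add]
      show qFact q (n + 1) = (q ^ (n - j) * qBinom q n j + qBinom q n (j + 1)) *
          (qFact q (j + 1) * qFact q (n + 1 - (j + 1)))
      have h3 : n + 1 - (j + 1) = n - j := by omega
      rw [h3, qFact_succ, hsplit]
      have h4 : qFact q n * (q ^ (n - j) * qNat q (j + 1)) =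
          q ^ (n - j) * qBinom q n j * (qFact q (j + 1) * qFact q (n - j)) := by
        rw [ih j hj, qFact_succ]
        ring
      calc qFact q n * (qNat q (n - j) + q ^ (n - j) * qNat q (j + 1))
          = qFact q n * qNat q (n - j) + qFact q n * (q ^ (n - j) * qNat q (j + 1)) := by ring
        _ = qBinom q n (j + 1) * (qFact q (j + 1) * qFact q (n - (j + 1))) * qNat q (n - j)
            + q ^ (n - j) * qBinom q n j * (qFact q (j + 1) * qFact q (n - j)) := by
            rw [key, h4]
        _ = (q ^ (n - j) * qBinom q n j + qBinom q n (j + 1)) *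
            (qFact q (j + 1) * qFact q (n - j)) := by
            rcases Nat.lt_or_ge j n with h | h
            · have h2 : n - j = (n - (j + 1)) + 1 := by omega
              rw [h2, qFact_succ q (n - (j + 1))]
              ring
            · have e0 : n - j = 0 := by omega
              rw [e0, qBinom_eq_zero q n (j + 1) (by omega)]
              simp [qNat]

/-- The q-binomial theorem for `y * x = q • (x * y)`. -/
lemma q_add_pow {k A : Type*} [Field k] [Ring A] [Algebra k A] (q : k)
    (x y : A) (hcomm : y * x = q • (x * y)) (n : ℕ) :
    (x + y) ^ n = ∑ i ∈ Finset.range (n + 1), qBinom q n i • (x ^ i * y ^ (n - i)) := by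
  have hpow : ∀ m : ℕ, y ^ m * x = (q ^ m) • (x * y ^ m) := by
    intro m
    induction m with
    | zero => simp
    | succ m ih =>
      calc y ^ (m + 1) * x = y ^ m * (y * x) := by rw [pow_succ, mul_assoc]
        _ = y ^ m * (q • (x * y)) := by rw [hcomm]
        _ = q • (y ^ m * x * y) := by rw [mul_smul_comm, mul_assoc]
        _ = q • ((q ^ m • (x * y ^ m)) * y) := by rw [ih]
        _ = (q ^ (m + 1)) • (x * y ^ (m + 1)) := by
            rw [smul_mul_assoc, smul_smul, pow_succ, mul_comm (q ^ m) q, mul_assoc, pow_succ]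
  induction n with
  | zero => simp [qBinom_zero]
  | succ s ih =>
    rw [pow_succ, ih, Finset.sum_mul]
    have hterm : ∀ i ∈ Finset.range (s + 1),
        qBinom q s i • (x ^ i * y ^ (s - i)) * (x + y) =
        (q ^ (s - i) * qBinom q s i) • (x ^ (i + 1) * y ^ (s - i))
          + qBinom q s i • (x ^ i * y ^ (s + 1 - i)) := by
      intro i hi
      have hi' : i ≤ s := by simpa [Nat.lt_succ_iff] using hi
      rw [mul_add]
      congr 1
      · rw [smul_mul_assoc, mul_assoc, hpow (s - i), mul_smul_comm, smul_smul,
          mul_comm (qBinom q s i)]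
        congr 1
        rw [← mul_assoc, ← pow_succ]
      · rw [smul_mul_assoc, mul_assoc, ← pow_succ,
          show s - i + 1 = s + 1 - i from by omega]
    rw [Finset.sum_congr rfl hterm, Finset.sum_add_distrib]
    -- RHS: split the sum over range (s+2)
    rw [Finset.sum_range_succ' (fun i => qBinom q (s + 1) i • (x ^ i * y ^ (s + 1 - i))) (s + 1)]
    have hzero : qBinom q (s + 1) 0 • (x ^ 0 * y ^ (s + 1 - 0)) = y ^ (s + 1) := by
      simp [qBinom_zero]
    rw [hzero]
    have hrec : ∀ i ∈ Finset.range (s + 1),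
        qBinom q (s + 1) (i + 1) • (x ^ (i + 1) * y ^ (s + 1 - (i + 1))) =
        (q ^ (s - i) * qBinom q s i) • (x ^ (i + 1) * y ^ (s - i))
          + qBinom q s (i + 1) • (x ^ (i + 1) * y ^ (s - i)) := by
      intro i hi
      have h1 : s + 1 - (i + 1) = s - i := by omega
      rw [h1]
      show (q ^ (s - i) * qBinom q s i + qBinom q s (i + 1)) • _ = _
      rw [add_smul]
    rw [Finset.sum_congr rfl hrec, Finset.sum_add_distrib]
    -- now match the two second sums
    have hshift : ∑ i ∈ Finset.range (s + 1), qBinom q s (i + 1) • (x ^ (i + 1) * y ^ (s - i)) =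
        ∑ i ∈ Finset.range (s + 1), qBinom q s i • (x ^ i * y ^ (s + 1 - i)) - y ^ (s + 1) := by
      have := Finset.sum_range_succ' (fun i => qBinom q s i • (x ^ i * y ^ (s + 1 - i))) s
      have hlast : ∑ i ∈ Finset.range s, qBinom q s (i + 1) • (x ^ (i + 1) * y ^ (s + 1 - (i + 1)))
          = ∑ i ∈ Finset.range (s + 1), qBinom q s (i + 1) • (x ^ (i + 1) * y ^ (s - i))
            - qBinom q s (s + 1) • (x ^ (s + 1) * y ^ (s - s)) := by
        rw [Finset.sum_range_succ (fun i => qBinom q s (i + 1) • (x ^ (i + 1) * y ^ (s - i))) s]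
        have : ∀ i ∈ Finset.range s, qBinom q s (i + 1) • (x ^ (i + 1) * y ^ (s + 1 - (i + 1)))
            = qBinom q s (i + 1) • (x ^ (i + 1) * y ^ (s - i)) := by
          intro i hi
          rw [Nat.succ_sub_succ]
        rw [Finset.sum_congr rfl this]
        abel
      rw [hlast, qBinom_eq_zero q s (s + 1) (by omega), zero_smul, sub_zero] at this
      have h0 : qBinom q s 0 • (x ^ 0 * y ^ (s + 1 - 0)) = y ^ (s + 1) := by
        simp [qBinom_zero]
      rw [h0] at this
      rw [eq_sub_iff_add_eq, ← this]
    rw [hshift]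
    abel

theorem stmt_2 {k A : Type*} [Field k] [CharZero k] [Ring A] [Algebra k A]
    (N : ℕ) (hN : 1 < N) (q : k) (hq : IsPrimitiveRoot q N)
    (x y : A) (hcomm : y * x = q • (x * y))
    (hnil : ∀ i ≤ N, x ^ i * y ^ (N - i) = 0) :
    qExp q N (x + y) = qExp q N x * qExp q N y := by
  -- nonvanishing of q-integers and q-factorials below N
  have hq1 : q ≠ 1 := hq.ne_one hN
  have hqNat_ne : ∀ m : ℕ, 0 < m → m < N → qNat q m ≠ 0 := by
    intro m hm0 hmN
    have : qNat q m = (q ^ m - 1) / (q - 1) := geom_sum_eq hq1 m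
    rw [this]
    apply div_ne_zero
    · exact sub_ne_zero_of_ne (hq.pow_ne_one_of_pos_of_lt hm0.ne' hmN)
    · exact sub_ne_zero_of_ne hq1
  have hqFact_ne : ∀ n : ℕ, n < N → qFact q n ≠ 0 := by
    intro n hn
    apply Finset.prod_ne_zero_iff.mpr
    intro i hi
    exact hqNat_ne (i + 1) (by omega) (by simp at hi; omega)
  -- vanishing of high monomials
  have hxy : ∀ i j : ℕ, N ≤ i + j → i ≤ N → x ^ i * y ^ j = 0 := by
    intro i j hij hiN
    have h1 : j = (N - i) + (j - (N - i)) := by omega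
    rw [h1, pow_add, ← mul_assoc, hnil i hiN, zero_mul]
  -- the target triangle sum
  set b : ℕ → ℕ → A := fun i j => ((qFact q i)⁻¹ * (qFact q j)⁻¹) • (x ^ i * y ^ j) with hb
  have hLHS : qExp q N (x + y) = ∑ n ∈ Finset.range N, ∑ i ∈ Finset.range (n + 1), b i (n - i) := by
    unfold qExp
    refine Finset.sum_congr rfl fun n hn => ?_
    rw [q_add_pow q x y hcomm n, Finset.smul_sum]
    refine Finset.sum_congr rfl fun i hi => ?_
    simp only [Finset.mem_range, Nat.lt_succ_iff] at hi
    simp only [Finset.mem_range] at hn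
    rw [hb, smul_smul]
    congr 1
    have h1 : qFact q n = qBinom q n i * (qFact q i * qFact q (n - i)) :=
      qFact_eq_qBinom_mul q n i hi
    have hfn : qFact q n ≠ 0 := hqFact_ne n hn
    have hfi : qFact q i ≠ 0 := hqFact_ne i (by omega)
    have hfni : qFact q (n - i) ≠ 0 := hqFact_ne (n - i) (by omega)
    field_simp
    rw [h1]; ring
  have hRHS : qExp q N x * qExp q N y = ∑ n ∈ Finset.range N,
      ∑ i ∈ Finset.range (n + 1), b i (n - i) := by
    unfold qExp
    rw [Finset.sum_mul_sum]
    have step1 : ∀ i ∈ Finset.range N,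
        ∑ j ∈ Finset.range N, ((qFact q i)⁻¹ • x ^ i) * ((qFact q j)⁻¹ • y ^ j) =
        ∑ j ∈ Finset.range (N - i), b i j := by
      intro i hi
      simp only [Finset.mem_range] at hi
      have hsub : Finset.range (N - i) ⊆ Finset.range N :=
        Finset.range_subset_range.mpr (by omega)
      rw [← Finset.sum_subset hsub]
      · refine Finset.sum_congr rfl fun j _ => ?_
        rw [hb, smul_mul_assoc, mul_smul_comm, smul_smul]
      · intro j hjN hj
        simp only [Finset.mem_range] at hjN hj
        rw [smul_mul_assoc, mul_smul_comm, smul_smul, hxy i j (by omega) (by omega), smul_zero]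
    rw [Finset.sum_congr rfl step1]
    rw [Finset.sum_range_diag_flip N (fun i j => b i j)]
  rw [hLHS, hRHS]
end

section
/- Let k be a field, H a bialgebra over k, u ∈ H a grouplike element with u² = 1, and x, y ∈ H elements with Δ(x) = x⊗1 + u⊗x, Δ(y) = y⊗1 + u⊗y, x² = 0, y² = 0, x·y = −y·x, u·x = −x·u, and u·y = −y·u. Fix a ∈ k and set c = 1 + a·x·y ∈ H. Then c is invertible with c^{−1} = 1 − a·x·y, and in the algebra H ⊗ H one has Δ(c)·(c^{−1} ⊗ c^{−1}) = 1⊗1 + a·(xu)⊗y − a·(yu)⊗x − a²·(xy)⊗(xy). In particular, if H is a Hopf algebra, the element 1⊗1 + a·(xu)⊗y − a·(yu)⊗x − a²·(xy)⊗(xy) is a Drinfeld twist for H, gauge-equivalent to the trivial twist 1⊗1. -/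
open scoped TensorProduct

noncomputable section

variable (k H : Type*) [Field k] [Ring H] [Bialgebra k H]

/-- A grouplike element: `Δ(g) = g ⊗ g` and `ε(g) = 1`. -/
def IsGrouplike (g : H) : Prop :=
  Coalgebra.counit (R := k) g = 1 ∧ Coalgebra.comul (R := k) g = g ⊗ₜ[k] g

/-- `Δ ⊗ id : H ⊗ H → H ⊗ H ⊗ H` (with `H ⊗ H ⊗ H = H ⊗ (H ⊗ H)`). -/
def comul12 : (H ⊗[k] H) →ₗ[k] H ⊗[k] (H ⊗[k] H) :=
  (TensorProduct.assoc k H H H).toLinearMap ∘ₗ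
    TensorProduct.map (Coalgebra.comul (R := k) (A := H)) LinearMap.id

/-- `id ⊗ Δ : H ⊗ H → H ⊗ H ⊗ H`. -/
def comul23 : (H ⊗[k] H) →ₗ[k] H ⊗[k] (H ⊗[k] H) :=
  TensorProduct.map LinearMap.id (Coalgebra.comul (R := k) (A := H))

/-- `ε ⊗ id : H ⊗ H → H`. -/
def counitL : (H ⊗[k] H) →ₗ[k] H :=
  (TensorProduct.lid k H).toLinearMap ∘ₗ
    TensorProduct.map (Coalgebra.counit (R := k) (A := H)) LinearMap.id

/-- `id ⊗ ε : H ⊗ H → H`. -/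
def counitR : (H ⊗[k] H) →ₗ[k] H :=
  (TensorProduct.rid k H).toLinearMap ∘ₗ
    TensorProduct.map LinearMap.id (Coalgebra.counit (R := k) (A := H))

/-- The element `J ⊗ 1` of `H ⊗ (H ⊗ H)`. -/
def tmulOne (J : H ⊗[k] H) : H ⊗[k] (H ⊗[k] H) :=
  TensorProduct.assoc k H H H (J ⊗ₜ[k] (1 : H))

/-- A Drinfeld twist: an invertible `J ∈ H ⊗ H` with
`(Δ⊗id)(J)·(J⊗1) = (id⊗Δ)(J)·(1⊗J)` and `(ε⊗id)(J) = 1 = (id⊗ε)(J)`.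
(The definition only uses the bialgebra structure; for a Hopf algebra it is the
usual notion of Drinfeld twist.) -/
def IsDrinfeldTwist (J : H ⊗[k] H) : Prop :=
  IsUnit J ∧
  comul12 k H J * tmulOne k H J = comul23 k H J * ((1 : H) ⊗ₜ[k] J) ∧
  counitL k H J = 1 ∧ counitR k H J = 1

/-- `J'` is gauge equivalent to `J` if `J' = Δ(c)·J·(c⁻¹ ⊗ c⁻¹)` for some
invertible `c` with `ε(c) = 1`. -/
def GaugeEquiv (J J' : H ⊗[k] H) : Prop :=
  ∃ c ci : H, c * ci = 1 ∧ ci * c = 1 ∧ Coalgebra.counit (R := k) c = 1 ∧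
    J' = Coalgebra.comul (R := k) c * J * (ci ⊗ₜ[k] ci)

def comul12A : (H ⊗[k] H) →ₐ[k] H ⊗[k] (H ⊗[k] H) :=
  (Algebra.TensorProduct.assoc k k k H H H).toAlgHom.comp
    (Algebra.TensorProduct.map (Bialgebra.comulAlgHom k H) (AlgHom.id k H))
def comul23A : (H ⊗[k] H) →ₐ[k] H ⊗[k] (H ⊗[k] H) :=
  Algebra.TensorProduct.map (AlgHom.id k H) (Bialgebra.comulAlgHom k H)
def counitLA : (H ⊗[k] H) →ₐ[k] H :=
  (Algebra.TensorProduct.lid k H).toAlgHom.comp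
    (Algebra.TensorProduct.map (Bialgebra.counitAlgHom k H) (AlgHom.id k H))
def counitRA : (H ⊗[k] H) →ₐ[k] H :=
  (Algebra.TensorProduct.rid k k H).toAlgHom.comp
    (Algebra.TensorProduct.map (AlgHom.id k H) (Bialgebra.counitAlgHom k H))

lemma comul12_eq : comul12 k H = (comul12A k H).toLinearMap := by
  ext z w; simp [comul12, comul12A]; rfl
lemma comul23_eq : comul23 k H = (comul23A k H).toLinearMap := by
  ext z w; simp [comul23, comul23A]
lemma counitL_eq : counitL k H = (counitLA k H).toLinearMap := by
  ext z w; simp [counitL, counitLA]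
lemma counitR_eq : counitR k H = (counitRA k H).toLinearMap := by
  ext z w; simp [counitR, counitRA]

lemma comul12_comul (c : H) :
    comul12 k H (Coalgebra.comul (R := k) c) = comul23 k H (Coalgebra.comul (R := k) c) := by
  have h := Coalgebra.coassoc_apply (R := k) (A := H) c
  simpa [comul12, comul23, LinearMap.rTensor, LinearMap.lTensor] using h

lemma counitL_comul (z : H) : counitL k H (Coalgebra.comul (R := k) z) = z := by
  have h := Coalgebra.rTensor_counit_comul (R := k) (A := H) z
  simp only [counitL, LinearMap.coe_comp, Function.comp_apply, LinearEquiv.coe_toLinearMap]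
  rw [show (TensorProduct.map (Coalgebra.counit (R := k) (A := H)) LinearMap.id)
      = LinearMap.rTensor H (Coalgebra.counit (R := k)) from rfl, h]
  simp

lemma counitR_comul (z : H) : counitR k H (Coalgebra.comul (R := k) z) = z := by
  have h := Coalgebra.lTensor_counit_comul (R := k) (A := H) z
  simp only [counitR, LinearMap.coe_comp, Function.comp_apply, LinearEquiv.coe_toLinearMap]
  rw [show (TensorProduct.map LinearMap.id (Coalgebra.counit (R := k) (A := H)))
      = LinearMap.lTensor H (Coalgebra.counit (R := k)) from rfl, h]
  simp

theorem twist_of_gauge (c ci : H) (h1 : c * ci = 1) (h2 : ci * c = 1)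
    (hc : Coalgebra.counit (R := k) c = 1) :
    IsDrinfeldTwist k H (Coalgebra.comul (R := k) c * (ci ⊗ₜ[k] ci)) := by
  have hci : Coalgebra.counit (R := k) ci = 1 := by
    have h := Bialgebra.counit_mul (R := k) ci c
    rw [h2, Bialgebra.counit_one, hc, mul_one] at h
    exact h.symm
  have hDD1 : Coalgebra.comul (R := k) c * Coalgebra.comul (R := k) ci = 1 := by
    rw [← Bialgebra.comul_mul, h1, Bialgebra.comul_one]
  have hDD2 : Coalgebra.comul (R := k) ci * Coalgebra.comul (R := k) c = 1 := by
    rw [← Bialgebra.comul_mul, h2, Bialgebra.comul_one]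
  refine ⟨?_, ?_, ?_, ?_⟩
  · refine isUnit_iff_exists.mpr ⟨(c ⊗ₜ[k] c) * Coalgebra.comul (R := k) ci, ?_, ?_⟩
    · calc Coalgebra.comul (R := k) c * (ci ⊗ₜ[k] ci) * ((c ⊗ₜ[k] c) * Coalgebra.comul (R := k) ci)
          = Coalgebra.comul (R := k) c *
              (((ci ⊗ₜ[k] ci) * (c ⊗ₜ[k] c)) * Coalgebra.comul (R := k) ci) := by
            rw [mul_assoc, mul_assoc]
        _ = 1 := by
            rw [Algebra.TensorProduct.tmul_mul_tmul, h2, ← Algebra.TensorProduct.one_def,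
              one_mul, hDD1]
    · calc (c ⊗ₜ[k] c) * Coalgebra.comul (R := k) ci *
            (Coalgebra.comul (R := k) c * (ci ⊗ₜ[k] ci))
          = (c ⊗ₜ[k] c) *
              ((Coalgebra.comul (R := k) ci * Coalgebra.comul (R := k) c) * (ci ⊗ₜ[k] ci)) := by
            rw [mul_assoc, mul_assoc]
        _ = 1 := by
            rw [hDD2, one_mul, Algebra.TensorProduct.tmul_mul_tmul, h1,
              ← Algebra.TensorProduct.one_def]
  · -- twist equation
    set Dc := Coalgebra.comul (R := k) c with hDc
    set Dci := Coalgebra.comul (R := k) ci with hDci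
    set eA := Algebra.TensorProduct.assoc k k k H H H with heA
    set M12 := Algebra.TensorProduct.map (Bialgebra.comulAlgHom k H) (AlgHom.id k H) with hM12
    set M23 := Algebra.TensorProduct.map (AlgHom.id k H) (Bialgebra.comulAlgHom k H) with hM23
    set J := Dc * (ci ⊗ₜ[k] ci) with hJ
    have a1 : comul12 k H J = eA (M12 J) := rfl
    have a2 : tmulOne k H J = eA (J ⊗ₜ[k] (1 : H)) := rfl
    have a3 : comul23 k H J = M23 J := rfl
    have b1 : M12 J = M12 Dc * (Dci ⊗ₜ[k] ci) := by rw [map_mul]; rfl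
    have hDciJ : Dci * J = ci ⊗ₜ[k] ci := by rw [hJ, ← mul_assoc, hDD2, one_mul]
    have b2 : (Dci ⊗ₜ[k] ci) * (J ⊗ₜ[k] (1 : H)) = (ci ⊗ₜ[k] ci) ⊗ₜ[k] ci := by
      rw [Algebra.TensorProduct.tmul_mul_tmul, hDciJ, mul_one]
    have lhs : comul12 k H J * tmulOne k H J
        = comul12 k H Dc * (ci ⊗ₜ[k] (ci ⊗ₜ[k] ci)) := by
      rw [a1, a2, ← map_mul, b1, mul_assoc, b2, map_mul]
      rfl
    have b3 : (ci ⊗ₜ[k] Dci) * ((1 : H) ⊗ₜ[k] J) = ci ⊗ₜ[k] (ci ⊗ₜ[k] ci) := by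
      rw [Algebra.TensorProduct.tmul_mul_tmul, hDciJ, mul_one]
    have b4 : M23 J = M23 Dc * (ci ⊗ₜ[k] Dci) := by rw [map_mul]; rfl
    have rhs : comul23 k H J * ((1 : H) ⊗ₜ[k] J) = comul23 k H Dc * (ci ⊗ₜ[k] (ci ⊗ₜ[k] ci)) := by
      rw [a3, b4, mul_assoc, b3]
      rfl
    rw [lhs, rhs, comul12_comul]
  · rw [counitL_eq]
    show counitLA k H (Coalgebra.comul (R := k) c * (ci ⊗ₜ[k] ci)) = 1
    rw [map_mul]
    have e1 : counitLA k H (Coalgebra.comul (R := k) c) = c := by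
      have := counitL_comul k H c
      rw [counitL_eq] at this
      exact this
    have e2 : counitLA k H (ci ⊗ₜ[k] ci) = ci := by
      simp [counitLA, hci]
    rw [e1, e2, h1]
  · rw [counitR_eq]
    show counitRA k H (Coalgebra.comul (R := k) c * (ci ⊗ₜ[k] ci)) = 1
    rw [map_mul]
    have e1 : counitRA k H (Coalgebra.comul (R := k) c) = c := by
      have := counitR_comul k H c
      rw [counitR_eq] at this
      exact this
    have e2 : counitRA k H (ci ⊗ₜ[k] ci) = ci := by
      simp [counitRA, hci]
    rw [e1, e2, h1]

/-- For `c = 1 + a·x·y`: `c` is invertible with inverse `1 - a·x·y`,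
`Δ(c)·(c⁻¹ ⊗ c⁻¹) = 1⊗1 + a·(xu)⊗y - a·(yu)⊗x - a²·(xy)⊗(xy)`, and this element
is a Drinfeld twist gauge equivalent to the trivial twist `1⊗1` (in particular,
for a Hopf algebra `H`, a Drinfeld twist in the usual sense). -/

theorem stmt_14 (u x y : H) (hu : IsGrouplike k H u) (hu2 : u ^ 2 = 1)
    (hx : Coalgebra.comul (R := k) x = x ⊗ₜ[k] (1 : H) + u ⊗ₜ[k] x)
    (hy : Coalgebra.comul (R := k) y = y ⊗ₜ[k] (1 : H) + u ⊗ₜ[k] y)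
    (hx2 : x ^ 2 = 0) (hy2 : y ^ 2 = 0) (hxy : x * y = -(y * x))
    (hux : u * x = -(x * u)) (huy : u * y = -(y * u)) (a : k) :
    ((1 + a • (x * y)) * (1 - a • (x * y)) = 1 ∧
      (1 - a • (x * y)) * (1 + a • (x * y)) = 1) ∧
    Coalgebra.comul (R := k) (1 + a • (x * y)) *
        ((1 - a • (x * y)) ⊗ₜ[k] (1 - a • (x * y))) =
      1 + a • ((x * u) ⊗ₜ[k] y) - a • ((y * u) ⊗ₜ[k] x)
        - (a ^ 2) • ((x * y) ⊗ₜ[k] (x * y)) ∧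
    IsDrinfeldTwist k H (1 + a • ((x * u) ⊗ₜ[k] y) - a • ((y * u) ⊗ₜ[k] x)
      - (a ^ 2) • ((x * y) ⊗ₜ[k] (x * y))) ∧
    GaugeEquiv k H 1 (1 + a • ((x * u) ⊗ₜ[k] y) - a • ((y * u) ⊗ₜ[k] x)
      - (a ^ 2) • ((x * y) ⊗ₜ[k] (x * y))) := by
  have hx2' : x * x = 0 := by rw [← sq]; exact hx2
  have hy2' : y * y = 0 := by rw [← sq]; exact hy2
  have huu : u * u = 1 := by rw [← sq]; exact hu2
  have hyx : y * x = -(x * y) := by rw [hxy, neg_neg]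
  have hxx2 : ∀ z : H, x * (x * z) = 0 := fun z => by rw [← mul_assoc, hx2', zero_mul]
  have hyy2 : ∀ z : H, y * (y * z) = 0 := fun z => by rw [← mul_assoc, hy2', zero_mul]
  have huu2 : ∀ z : H, u * (u * z) = z := fun z => by rw [← mul_assoc, huu, one_mul]
  have hux2 : ∀ z : H, u * (x * z) = -(x * (u * z)) := fun z => by
    rw [← mul_assoc, hux, neg_mul, mul_assoc]
  have huy2 : ∀ z : H, u * (y * z) = -(y * (u * z)) := fun z => by
    rw [← mul_assoc, huy, neg_mul, mul_assoc]
  have hyx2 : ∀ z : H, y * (x * z) = -(x * (y * z)) := fun z => by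
    rw [← mul_assoc, hyx, neg_mul, mul_assoc]
  have hw2 : (x * y) * (x * y) = 0 := by
    rw [mul_assoc, hyx2, hy2', mul_zero, neg_zero, mul_zero]
  have hs0 : (a • (x * y)) * (a • (x * y)) = 0 := by
    rw [smul_mul_assoc, mul_smul_comm, hw2, smul_zero, smul_zero]
  have hcc : (1 + a • (x * y)) * (1 - a • (x * y)) = 1 := by
    rw [mul_sub, mul_one, add_mul, one_mul, hs0, add_zero]
    abel
  have hcic : (1 - a • (x * y)) * (1 + a • (x * y)) = 1 := by
    rw [sub_mul, one_mul, mul_add, mul_one, hs0, add_zero]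
    abel
  have h1H : (1 : H) ≠ 0 := by
    intro h
    have h0 := Bialgebra.counit_one (R := k) (A := H)
    rw [h, map_zero] at h0
    exact one_ne_zero h0.symm
  have hεx : Coalgebra.counit (R := k) x = 0 := by
    have h := Coalgebra.rTensor_counit_comul (R := k) (A := H) x
    rw [hx, map_add] at h
    simp only [LinearMap.rTensor_tmul, hu.1] at h
    have h2 : (Coalgebra.counit (R := k) x) ⊗ₜ[k] (1 : H) = 0 := by
      rwa [add_eq_right] at h
    have h3 : Coalgebra.counit (R := k) x • (1 : H) = 0 := by
      have := congrArg (TensorProduct.lid k H) h2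
      simpa using this
    rcases smul_eq_zero.mp h3 with h4 | h4
    · exact h4
    · exact absurd h4 h1H
  have hεc : Coalgebra.counit (R := k) (1 + a • (x * y)) = 1 := by
    rw [map_add, Bialgebra.counit_one, map_smul, Bialgebra.counit_mul, hεx, zero_mul,
      smul_zero, add_zero]
  have hJ : Coalgebra.comul (R := k) (1 + a • (x * y)) *
        ((1 - a • (x * y)) ⊗ₜ[k] (1 - a • (x * y))) =
      1 + a • ((x * u) ⊗ₜ[k] y) - a • ((y * u) ⊗ₜ[k] x)
        - (a ^ 2) • ((x * y) ⊗ₜ[k] (x * y)) := by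
    rw [map_add, Bialgebra.comul_one, map_smul, Bialgebra.comul_mul, hx, hy]
    simp only [TensorProduct.tmul_sub, TensorProduct.sub_tmul, TensorProduct.tmul_add,
      TensorProduct.add_tmul, ← TensorProduct.smul_tmul', TensorProduct.tmul_smul,
      add_mul, mul_add, sub_mul, mul_sub, smul_mul_assoc, mul_smul_comm,
      Algebra.TensorProduct.tmul_mul_tmul, one_mul, mul_one, smul_smul]
    simp only [mul_assoc, hyx, hux, huy, hx2', hy2', huu, hux2, huy2, hyx2, hxx2, hyy2, huu2,
      neg_mul, mul_neg, TensorProduct.neg_tmul, TensorProduct.tmul_neg,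
      TensorProduct.zero_tmul, TensorProduct.tmul_zero, smul_zero, smul_neg, neg_neg,
      mul_zero, zero_mul, neg_zero, one_mul, mul_one, smul_smul,
      Algebra.TensorProduct.one_def]
    module
  refine ⟨⟨hcc, hcic⟩, hJ, ?_, ?_⟩
  · rw [← hJ]
    exact twist_of_gauge k H _ _ hcc hcic hεc
  · exact ⟨1 + a • (x * y), 1 - a • (x * y), hcc, hcic, hεc, by rw [mul_one, ← hJ]⟩

end
end
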